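/- In any memoryless silence opinion model (SOM^-) whose influence graph is a clique with n ≥ 3 agents, the agents converge to consensus: there exists v ∈ [0,1] such that for all i ∈ A, lim_{t→∞} B_i^t = v. -/

import Mathlib

open Finset Filter Topology

noncomputable section

/-- The set of neighbors (contacts) of agent `i`: agents `j ≠ i` with an edge `(j,i)` to `i`,
where the edge relation is `(j,i) ∈ E ↔ I j i ≠ 0`. -/
def nbrs {n : ℕ} (I : Fin n → Fin n → ℝ) (i : Fin n) : Finset (Fin n) :=
  Finset.univ.filter (fun j => j ≠ i ∧ I j i ≠ 0)

/-- Maximum opinion value in an opinion state. -/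
def maxOp {n : ℕ} (hn : 0 < n) (b : Fin n → ℝ) : ℝ :=
  Finset.univ.sup' ⟨⟨0, hn⟩, Finset.mem_univ _⟩ b

/-- Minimum opinion value in an opinion state. -/
def minOp {n : ℕ} (hn : 0 < n) (b : Fin n → ℝ) : ℝ :=
  Finset.univ.inf' ⟨⟨0, hn⟩, Finset.mem_univ _⟩ b

/-- The influence graph is a clique: every pair of distinct agents is connected. -/
def IsClique {n : ℕ} (I : Fin n → Fin n → ℝ) : Prop :=
  ∀ i j : Fin n, i ≠ j → I i j ≠ 0

/-- A memoryless silence opinion model (SOM⁻) on `n` agents. The edge set is the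
support of `I` (so `I i j = 0 ↔ (i,j) ∉ E`). `s t i = 1` means agent `i` is
non-silent at time `t`, `s t i = 0` means silent. -/
structure SOMminus (n : ℕ) where
  /-- influence weights -/
  I : Fin n → Fin n → ℝ
  I_nonneg : ∀ i j, 0 ≤ I i j
  I_le_one : ∀ i j, I i j ≤ 1
  /-- total influence on each agent (from neighbors and itself) is 1 -/
  sum_one : ∀ i, ∑ j ∈ insert i (nbrs I i), I j i = 1
  /-- tolerance radii -/
  τ : Fin n → ℝ
  τ_mem : ∀ i, τ i ∈ Set.Icc (0:ℝ) 1
  /-- opinion states -/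
  B : ℕ → Fin n → ℝ
  /-- silence states -/
  s : ℕ → Fin n → ℝ
  B0_mem : ∀ i, B 0 i ∈ Set.Icc (0:ℝ) 1
  s_bool : ∀ t i, s t i = 0 ∨ s t i = 1
  /-- memoryless opinion update -/
  B_upd : ∀ t i, B (t+1) i =
    B t i + ∑ j ∈ nbrs I i, I j i * s t j * (B t j - B t i)
  /-- silence update: non-silent iff at least ⌈|N_i^t|/2⌉ non-silent neighbors are within tolerance -/
  s_upd : ∀ t i, (s (t+1) i = 1 ↔
    (((nbrs I i).filter (fun j => s t j = 1)).card + 1) / 2 ≤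
      (((nbrs I i).filter (fun j => s t j = 1)).filter
        (fun j => |B t i - B t j| ≤ τ i)).card)

namespace SOMhelp

variable {n : ℕ}

lemma le_maxOp (hn : 0 < n) (b : Fin n → ℝ) (i : Fin n) : b i ≤ maxOp hn b :=
  Finset.le_sup' b (Finset.mem_univ i)

lemma minOp_le (hn : 0 < n) (b : Fin n → ℝ) (i : Fin n) : minOp hn b ≤ b i :=
  Finset.inf'_le b (Finset.mem_univ i)

lemma minOp_le_maxOp (hn : 0 < n) (b : Fin n → ℝ) : minOp hn b ≤ maxOp hn b :=
  le_trans (minOp_le hn b ⟨0, hn⟩) (le_maxOp hn b ⟨0, hn⟩)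

lemma row_le (hn : 0 < n) (b p : Fin n → ℝ) (hp : ∀ k, 0 ≤ p k)
    (hps : ∑ k, p k = 1) : ∑ k, p k * b k ≤ maxOp hn b := by
  calc ∑ k, p k * b k ≤ ∑ k, p k * maxOp hn b :=
        Finset.sum_le_sum fun k _ => mul_le_mul_of_nonneg_left (le_maxOp hn b k) (hp k)
    _ = maxOp hn b := by rw [← Finset.sum_mul, hps, one_mul]

lemma le_row (hn : 0 < n) (b p : Fin n → ℝ) (hp : ∀ k, 0 ≤ p k)
    (hps : ∑ k, p k = 1) : minOp hn b ≤ ∑ k, p k * b k := by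
  calc minOp hn b = ∑ k, p k * minOp hn b := by rw [← Finset.sum_mul, hps, one_mul]
    _ ≤ ∑ k, p k * b k :=
        Finset.sum_le_sum fun k _ => mul_le_mul_of_nonneg_left (minOp_le hn b k) (hp k)

lemma row_contract (hn : 0 < n) (b p q : Fin n → ℝ) (α : ℝ) (hα : 0 ≤ α)
    (hp : ∀ k, 0 ≤ p k) (hq : ∀ k, 0 ≤ q k)
    (hps : ∑ k, p k = 1) (hqs : ∑ k, q k = 1)
    (k0 : Fin n) (hpk : α ≤ p k0) (hqk : α ≤ q k0) :
    ∑ k, p k * b k - ∑ k, q k * b k ≤ (1 - α) * (maxOp hn b - minOp hn b) := by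
  have key : ∀ r : Fin n → ℝ, (∀ k, 0 ≤ r k) → ∑ k, r k = 1 → α ≤ r k0 →
      (∑ k, r k * b k - α * b k0 ≤ (1 - α) * maxOp hn b ∧
       (1 - α) * minOp hn b ≤ ∑ k, r k * b k - α * b k0) := by
    intro r hr hrs hrk
    have hδ : ∑ k, (if k = k0 then α * b k else 0) = α * b k0 := by simp
    have hsplit : ∑ k, r k * b k - α * b k0
        = ∑ k, (r k - if k = k0 then α else 0) * b k := by
      rw [← hδ, ← Finset.sum_sub_distrib]
      exact Finset.sum_congr rfl fun k _ => by split <;> ring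
    have hnn : ∀ k, 0 ≤ r k - if k = k0 then α else 0 := by
      intro k; split
      · next h => subst h; linarith
      · simpa using hr k
    have hsum : ∑ k, (r k - if k = k0 then α else 0) = 1 - α := by
      rw [Finset.sum_sub_distrib, hrs]; simp
    constructor
    · rw [hsplit, ← hsum, Finset.sum_mul]
      exact Finset.sum_le_sum fun k _ =>
        mul_le_mul_of_nonneg_left (le_maxOp hn b k) (hnn k)
    · rw [hsplit, ← hsum, Finset.sum_mul]
      exact Finset.sum_le_sum fun k _ =>
        mul_le_mul_of_nonneg_left (minOp_le hn b k) (hnn k)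
  obtain ⟨h1, -⟩ := key p hp hps hpk
  obtain ⟨-, h2⟩ := key q hq hqs hqk
  linarith

end SOMhelp

namespace SOMhelp

variable {n : ℕ}

/-- Row `i` of the effective update matrix at time `t`. -/
def Prow (M : SOMminus n) (t : ℕ) (i k : Fin n) : ℝ :=
  if k = i then 1 - ∑ j ∈ Finset.univ.erase i, M.I j i * M.s t j
  else M.I k i * M.s t k

variable (M : SOMminus n)

lemma s_nonneg (t : ℕ) (j : Fin n) : 0 ≤ M.s t j := by
  rcases M.s_bool t j with h | h <;> simp [h]

lemma s_le_one (t : ℕ) (j : Fin n) : M.s t j ≤ 1 := by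
  rcases M.s_bool t j with h | h <;> simp [h]

lemma nbrs_eq (hclique : IsClique M.I) (i : Fin n) :
    nbrs M.I i = Finset.univ.erase i := by
  ext j
  simp only [nbrs, Finset.mem_filter, Finset.mem_univ, true_and, Finset.mem_erase, and_true]
  exact ⟨fun h => h.1, fun h => ⟨h, hclique j i h⟩⟩

lemma I_col_sum (hclique : IsClique M.I) (i : Fin n) : ∑ j, M.I j i = 1 := by
  have h := M.sum_one i
  rwa [nbrs_eq M hclique, Finset.insert_erase (Finset.mem_univ i)] at h

lemma erase_sum (hclique : IsClique M.I) (i : Fin n) :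
    ∑ j ∈ Finset.univ.erase i, M.I j i = 1 - M.I i i := by
  have h := I_col_sum M hclique i
  rw [← Finset.add_sum_erase _ _ (Finset.mem_univ i)] at h
  linarith

lemma erase_s_sum_le (hclique : IsClique M.I) (t : ℕ) (i : Fin n) :
    ∑ j ∈ Finset.univ.erase i, M.I j i * M.s t j ≤ 1 := by
  calc ∑ j ∈ Finset.univ.erase i, M.I j i * M.s t j
      ≤ ∑ j ∈ Finset.univ.erase i, M.I j i := by
        exact Finset.sum_le_sum fun j _ =>
          mul_le_of_le_one_right (M.I_nonneg j i) (s_le_one M t j)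
    _ = 1 - M.I i i := erase_sum M hclique i
    _ ≤ 1 := by linarith [M.I_nonneg i i]

lemma Prow_nonneg (hclique : IsClique M.I) (t : ℕ) (i k : Fin n) :
    0 ≤ Prow M t i k := by
  unfold Prow; split
  · linarith [erase_s_sum_le M hclique t i]
  · exact mul_nonneg (M.I_nonneg k i) (s_nonneg M t k)

lemma Prow_sum (hclique : IsClique M.I) (t : ℕ) (i : Fin n) :
    ∑ k, Prow M t i k = 1 := by
  rw [← Finset.add_sum_erase _ _ (Finset.mem_univ i)]
  have h1 : Prow M t i i = 1 - ∑ j ∈ Finset.univ.erase i, M.I j i * M.s t j := by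
    simp [Prow]
  have h2 : ∑ k ∈ Finset.univ.erase i, Prow M t i k
      = ∑ k ∈ Finset.univ.erase i, M.I k i * M.s t k :=
    Finset.sum_congr rfl fun k hk => by
      rw [Prow, if_neg (Finset.mem_erase.mp hk).1]
  rw [h1, h2]; ring

lemma B_eq (hclique : IsClique M.I) (t : ℕ) (i : Fin n) :
    M.B (t+1) i = ∑ k, Prow M t i k * M.B t k := by
  rw [M.B_upd, nbrs_eq M hclique,
    show (∑ k, Prow M t i k * M.B t k)
      = Prow M t i i * M.B t i + ∑ k ∈ Finset.univ.erase i, Prow M t i k * M.B t k from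
      (Finset.add_sum_erase _ _ (Finset.mem_univ i)).symm]
  have h1 : Prow M t i i = 1 - ∑ j ∈ Finset.univ.erase i, M.I j i * M.s t j := by
    simp [Prow]
  have h2 : ∑ k ∈ Finset.univ.erase i, Prow M t i k * M.B t k
      = ∑ k ∈ Finset.univ.erase i, M.I k i * M.s t k * M.B t k :=
    Finset.sum_congr rfl fun k hk => by
      rw [Prow, if_neg (Finset.mem_erase.mp hk).1]
  have h3 : ∑ j ∈ Finset.univ.erase i, M.I j i * M.s t j * (M.B t j - M.B t i)
      = ∑ j ∈ Finset.univ.erase i, M.I j i * M.s t j * M.B t j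
        - (∑ j ∈ Finset.univ.erase i, M.I j i * M.s t j) * M.B t i := by
    rw [Finset.sum_mul, ← Finset.sum_sub_distrib]
    exact Finset.sum_congr rfl fun j _ => by ring
  rw [h1, h2, h3]; ring

end SOMhelp

namespace SOMhelp

variable {n : ℕ} (M : SOMminus n)

/-- The minimum off-diagonal influence weight (via an `if` to stay total). -/
def alpha (hn : 0 < n) : ℝ :=
  (Finset.univ ×ˢ Finset.univ).inf'
    ⟨(⟨0, hn⟩, ⟨0, hn⟩), Finset.mk_mem_product (Finset.mem_univ _) (Finset.mem_univ _)⟩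
    fun p => if p.1 = p.2 then 1 else M.I p.1 p.2

lemma alpha_le (hn : 0 < n) {j i : Fin n} (h : j ≠ i) : alpha M hn ≤ M.I j i := by
  have := Finset.inf'_le (f := fun p : Fin n × Fin n => if p.1 = p.2 then 1 else M.I p.1 p.2)
    (b := (j, i)) (Finset.mk_mem_product (Finset.mem_univ j) (Finset.mem_univ i))
  simpa [alpha, if_neg h] using this

lemma alpha_pos (hn : 0 < n) (hclique : IsClique M.I) : 0 < alpha M hn := by
  rw [alpha]; refine (Finset.lt_inf'_iff ..).mpr ?_
  rintro ⟨j, i⟩ -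
  dsimp only
  split
  · norm_num
  · next h => exact lt_of_le_of_ne (M.I_nonneg j i) (Ne.symm (hclique j i h))

lemma alpha_le_one (hn : 0 < n) : alpha M hn ≤ 1 := by
  have := Finset.inf'_le (f := fun p : Fin n × Fin n => if p.1 = p.2 then 1 else M.I p.1 p.2)
    (b := ((⟨0, hn⟩ : Fin n), (⟨0, hn⟩ : Fin n)))
    (Finset.mk_mem_product (Finset.mem_univ _) (Finset.mem_univ _))
  simpa [alpha] using this

lemma exists_third (hn3 : 3 ≤ n) (a b : Fin n) : ∃ c : Fin n, c ≠ a ∧ c ≠ b := by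
  by_contra h
  push_neg at h
  have hsub : (Finset.univ : Finset (Fin n)) ⊆ {a, b} := by
    intro x _
    rcases eq_or_ne x a with rfl | hx
    · simp
    · simp [h x hx]
  have hcard := Finset.card_le_card hsub
  have h2 : ({a, b} : Finset (Fin n)).card ≤ 2 :=
    le_trans (Finset.card_insert_le _ _) (by simp)
  rw [Finset.card_univ, Fintype.card_fin] at hcard
  omega

lemma I_le_one_sub_alpha (hn3 : 3 ≤ n) (hclique : IsClique M.I)
    {a b : Fin n} (hab : a ≠ b) :
    M.I a b ≤ 1 - alpha M (by omega) := by
  obtain ⟨c, hca, hcb⟩ := exists_third hn3 a b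
  have hsub : ({a, c} : Finset (Fin n)) ⊆ Finset.univ := Finset.subset_univ _
  have hpair : ∑ j ∈ ({a, c} : Finset (Fin n)), M.I j b = M.I a b + M.I c b :=
    Finset.sum_pair (Ne.symm hca)
  have hle : ∑ j ∈ ({a, c} : Finset (Fin n)), M.I j b ≤ ∑ j, M.I j b :=
    Finset.sum_le_sum_of_subset_of_nonneg hsub fun j _ _ => M.I_nonneg j b
  rw [hpair, I_col_sum M hclique b] at hle
  have := alpha_le M (show 0 < n by omega) hcb
  linarith

end SOMhelp

namespace SOMhelp

variable {n : ℕ} (M : SOMminus n)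

lemma diag_ge (hn3 : 3 ≤ n) (hclique : IsClique M.I) (t : ℕ) (a c : Fin n)
    (hzero : ∀ l, l ≠ a → l ≠ c → M.s t l = 0) :
    alpha M (by omega) ≤ Prow M t a a := by
  have hα1 := alpha_le_one M (show 0 < n by omega)
  have hsum : ∑ l ∈ Finset.univ.erase a, M.I l a * M.s t l ≤ 1 - alpha M (by omega) := by
    by_cases hca : c = a
    · have hz : ∀ l ∈ Finset.univ.erase a, M.I l a * M.s t l = 0 := by
        intro l hl
        rw [hzero l (Finset.mem_erase.mp hl).1 (hca ▸ (Finset.mem_erase.mp hl).1), mul_zero]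
      rw [Finset.sum_eq_zero hz]; linarith
    · have hone : ∑ l ∈ Finset.univ.erase a, M.I l a * M.s t l = M.I c a * M.s t c := by
        apply Finset.sum_eq_single_of_mem c (Finset.mem_erase.mpr ⟨hca, Finset.mem_univ c⟩)
        intro l hl hlc
        rw [hzero l (Finset.mem_erase.mp hl).1 hlc, mul_zero]
      rw [hone]
      have h1 : M.I c a ≤ 1 - alpha M (by omega) := I_le_one_sub_alpha M hn3 hclique hca
      have h2 : M.I c a * M.s t c ≤ M.I c a :=
        mul_le_of_le_one_right (M.I_nonneg c a) (s_le_one M t c)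
      linarith
  have : Prow M t a a = 1 - ∑ l ∈ Finset.univ.erase a, M.I l a * M.s t l := by simp [Prow]
  rw [this]; linarith

lemma off_eq (t : ℕ) {i k : Fin n} (h : k ≠ i) (hs : M.s t k = 1) :
    Prow M t i k = M.I k i := by
  rw [Prow, if_neg h, hs, mul_one]

lemma key (hn3 : 3 ≤ n) (hclique : IsClique M.I) (t : ℕ)
    (hex : ∃ j, M.s t j = 1) (i i' : Fin n) :
    ∃ k, alpha M (by omega) ≤ Prow M t i k ∧ alpha M (by omega) ≤ Prow M t i' k := by
  by_cases h1 : ∃ j, M.s t j = 1 ∧ j ≠ i ∧ j ≠ i'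
  · obtain ⟨j, hsj, hji, hji'⟩ := h1
    exact ⟨j, by rw [off_eq M t hji hsj]; exact alpha_le M _ hji,
      by rw [off_eq M t hji' hsj]; exact alpha_le M _ hji'⟩
  · push_neg at h1
    have hzero : ∀ l, l ≠ i → l ≠ i' → M.s t l = 0 := by
      intro l hl hl'
      rcases M.s_bool t l with h | h
      · exact h
      · exact absurd (h1 l h hl) hl'
    by_cases hsi : M.s t i = 1
    · refine ⟨i, diag_ge M hn3 hclique t i i' hzero, ?_⟩
      by_cases hii : i' = i
      · rw [hii]; exact diag_ge M hn3 hclique t i i' hzero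
      · rw [off_eq M t (fun h : i = i' => hii h.symm) hsi]
        exact alpha_le M _ (fun h : i = i' => hii h.symm)
    · by_cases hsi' : M.s t i' = 1
      · have hzero' : ∀ l, l ≠ i' → l ≠ i → M.s t l = 0 := fun l h h' => hzero l h' h
        refine ⟨i', ?_, diag_ge M hn3 hclique t i' i hzero'⟩
        by_cases hii : i = i'
        · rw [hii]; exact diag_ge M hn3 hclique t i' i hzero'
        · rw [off_eq M t (fun h : i' = i => hii h.symm) hsi']
          exact alpha_le M _ (fun h : i' = i => hii h.symm)
      · exfalso
        obtain ⟨j, hj⟩ := hex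
        rcases eq_or_ne j i with rfl | hji
        · exact hsi hj
        · exact hsi' (h1 j hj hji ▸ hj)

end SOMhelp

namespace SOMhelp

lemma revive {n : ℕ} (hn : 0 < n) (M : SOMminus n) (t : ℕ)
    (h : ∀ j, M.s t j ≠ 1) : ∃ j, M.s (t+1) j = 1 := by
  refine ⟨⟨0, hn⟩, (M.s_upd t _).mpr ?_⟩
  have he : (nbrs M.I ⟨0, hn⟩).filter (fun l => M.s t l = 1) = ∅ :=
    Finset.filter_eq_empty_iff.mpr fun hl _ => h _
  rw [he]
  simp

end SOMhelp

/-- In any SOM⁻ model whose influence graph is a clique with `n ≥ 3`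
agents, the agents converge to consensus. -/
theorem stmt_10 {n : ℕ} (hn3 : 3 ≤ n) (M : SOMminus n) (hclique : IsClique M.I) :
    ∃ v ∈ Set.Icc (0:ℝ) 1, ∀ i : Fin n, Tendsto (fun t => M.B t i) atTop (𝓝 v) := by
  have hn : 0 < n := by omega
  set α := SOMhelp.alpha M hn with hαdef
  have hαpos : 0 < α := SOMhelp.alpha_pos M hn hclique
  have hα1 : α ≤ 1 := SOMhelp.alpha_le_one M hn
  set D : ℕ → ℝ := fun t => maxOp hn (M.B t) - minOp hn (M.B t) with hDdef
  have hD0 : ∀ t, 0 ≤ D t := fun t => sub_nonneg.mpr (SOMhelp.minOp_le_maxOp hn _)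
  have hPn : ∀ t i k, 0 ≤ SOMhelp.Prow M t i k := SOMhelp.Prow_nonneg M hclique
  have hPs : ∀ t i, ∑ k, SOMhelp.Prow M t i k = 1 := SOMhelp.Prow_sum M hclique
  have hBe := SOMhelp.B_eq M hclique
  have hstep : ∀ (t : ℕ) (β : ℝ), 0 ≤ β →
      (∀ i i' : Fin n, ∃ k, β ≤ SOMhelp.Prow M t i k ∧ β ≤ SOMhelp.Prow M t i' k) →
      D (t+1) ≤ (1-β) * D t := by
    intro t β hβ hkey
    obtain ⟨a, -, ha⟩ := Finset.exists_mem_eq_sup' (⟨⟨0,hn⟩, Finset.mem_univ _⟩ :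
      (Finset.univ : Finset (Fin n)).Nonempty) (M.B (t+1))
    obtain ⟨c, -, hc⟩ := Finset.exists_mem_eq_inf' (⟨⟨0,hn⟩, Finset.mem_univ _⟩ :
      (Finset.univ : Finset (Fin n)).Nonempty) (M.B (t+1))
    obtain ⟨k0, hk1, hk2⟩ := hkey a c
    have hrc := SOMhelp.row_contract hn (M.B t) (SOMhelp.Prow M t a) (SOMhelp.Prow M t c)
      β hβ (hPn t a) (hPn t c) (hPs t a) (hPs t c) k0 hk1 hk2
    have hde : D (t+1) = M.B (t+1) a - M.B (t+1) c := by
      rw [hDdef]; dsimp only; rw [maxOp, minOp, ha, hc]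
    rw [hde, hBe t a, hBe t c]
    exact hrc
  have hmono : ∀ t, D (t+1) ≤ D t := by
    intro t
    have := hstep t 0 le_rfl (fun i i' => ⟨i, hPn t i i, hPn t i' i⟩)
    linarith
  have hcon : ∀ t, (∃ j, M.s t j = 1) → D (t+1) ≤ (1-α) * D t := fun t hex =>
    hstep t α (le_of_lt hαpos) (SOMhelp.key M hn3 hclique t hex)
  have htwo : ∀ t, D (t+2) ≤ (1-α) * D t := by
    intro t
    by_cases hex : ∃ j, M.s t j = 1
    · have h1 := hcon t hex
      have h2 := hmono (t+1)
      have h3 : D (t+1+1) ≤ D (t+1) := h2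
      calc D (t+2) = D (t+1+1) := by norm_num
        _ ≤ D (t+1) := h3
        _ ≤ (1-α) * D t := h1
    · push_neg at hex
      have h1 := hcon (t+1) (SOMhelp.revive hn M t hex)
      have h2 : (1-α) * D (t+1) ≤ (1-α) * D t :=
        mul_le_mul_of_nonneg_left (hmono t) (by linarith)
      calc D (t+2) = D (t+1+1) := by norm_num
        _ ≤ (1-α) * D (t+1) := h1
        _ ≤ (1-α) * D t := h2
  have hgeo : ∀ k, D (2*k) ≤ (1-α)^k * D 0 := by
    intro k
    induction k with
    | zero => simp
    | succ k ih =>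
      have h1 : 2*(k+1) = 2*k+2 := by ring
      rw [h1, pow_succ]
      calc D (2*k+2) ≤ (1-α) * D (2*k) := htwo (2*k)
        _ ≤ (1-α) * ((1-α)^k * D 0) := mul_le_mul_of_nonneg_left ih (by linarith)
        _ = (1-α)^k * (1-α) * D 0 := by ring
  have hDanti : Antitone D := antitone_nat_of_succ_le hmono
  have hbound : ∀ t, D t ≤ (1-α)^(t/2) * D 0 := fun t =>
    le_trans (hDanti (show 2*(t/2) ≤ t by omega)) (hgeo (t/2))
  have hhalf : Tendsto (fun t : ℕ => t / 2) atTop atTop :=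
    Filter.tendsto_atTop_atTop.mpr fun b => ⟨2*b, fun a ha => by omega⟩
  have hpow : Tendsto (fun t : ℕ => (1-α)^(t/2) * D 0) atTop (𝓝 0) := by
    have h := (tendsto_pow_atTop_nhds_zero_of_lt_one (by linarith : (0:ℝ) ≤ 1-α)
      (by linarith : (1:ℝ)-α < 1)).comp hhalf
    simpa using h.mul_const (D 0)
  have hDlim : Tendsto D atTop (𝓝 0) := squeeze_zero hD0 hbound hpow
  have hub : ∀ t i, M.B (t+1) i ≤ maxOp hn (M.B t) := fun t i => by
    rw [hBe t i]; exact SOMhelp.row_le hn _ _ (hPn t i) (hPs t i)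
  have hlb : ∀ t i, minOp hn (M.B t) ≤ M.B (t+1) i := fun t i => by
    rw [hBe t i]; exact SOMhelp.le_row hn _ _ (hPn t i) (hPs t i)
  have hMxanti : Antitone (fun t => maxOp hn (M.B t)) :=
    antitone_nat_of_succ_le fun t => Finset.sup'_le _ _ fun i _ => hub t i
  have hmnmono : Monotone (fun t => minOp hn (M.B t)) :=
    monotone_nat_of_le_succ fun t => Finset.le_inf' _ _ fun i _ => hlb t i
  have hmn0 : 0 ≤ minOp hn (M.B 0) := Finset.le_inf' _ _ fun i _ => (M.B0_mem i).1
  have hMx0 : maxOp hn (M.B 0) ≤ 1 := Finset.sup'_le _ _ fun i _ => (M.B0_mem i).2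
  have hbdd : BddBelow (Set.range fun t => maxOp hn (M.B t)) := by
    refine ⟨0, ?_⟩
    rintro x ⟨t, rfl⟩
    exact le_trans (le_trans hmn0 (hmnmono (Nat.zero_le t))) (SOMhelp.minOp_le_maxOp hn _)
  set v := ⨅ t, maxOp hn (M.B t) with hv
  have hMxlim : Tendsto (fun t => maxOp hn (M.B t)) atTop (𝓝 v) :=
    tendsto_atTop_ciInf hMxanti hbdd
  have hmnlim : Tendsto (fun t => minOp hn (M.B t)) atTop (𝓝 v) := by
    have he : (fun t => minOp hn (M.B t)) = fun t => maxOp hn (M.B t) - D t := by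
      funext t; rw [hDdef]; ring
    rw [he]
    simpa using hMxlim.sub hDlim
  refine ⟨v, ⟨?_, ?_⟩, ?_⟩
  · exact ge_of_tendsto hmnlim (Filter.Eventually.of_forall fun t =>
      le_trans hmn0 (hmnmono (Nat.zero_le t)))
  · exact le_trans (ciInf_le hbdd 0) hMx0
  · intro i
    exact tendsto_of_tendsto_of_tendsto_of_le_of_le hmnlim hMxlim
      (fun t => SOMhelp.minOp_le hn (M.B t) i) (fun t => SOMhelp.le_maxOp hn (M.B t) i)
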